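/- Let R₃ > e and c = (10 ln R₃)⁻¹, and let f(r) = -c(r ln r - (ln R₃ + 1)r) + b₃ where b₃ is chosen so that f(R₃) = b₁ with 0 < b₁ ≤ 100. Then f(R₃) = b₁, f'(R₃) = 0, r·f''(r) = -c for all r > 0, and if λ > 1 satisfies f(λR₃) = 0, then (λ ln λ - λ + 1)·R₃/(10 ln R₃) = b₁; moreover if R₃ ≥ 10⁵ then λ ≤ 10, and |f'(r)| ≤ (ln R₃)⁻¹ for all r ∈ [R₃, λR₃]. -/

import Mathlib

set_option maxHeartbeats 1000000 in
/-- properties of `f(r) = -c(r ln r - (ln R₃ + 1)r) + b₃`. -/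
theorem stmt5 (R₃ b₁ b₃ c : ℝ) (hR₃ : Real.exp 1 < R₃)
    (hc : c = (10 * Real.log R₃)⁻¹) (hb₁ : 0 < b₁ ∧ b₁ ≤ 100) (f : ℝ → ℝ)
    (hf : f = fun r => -c * (r * Real.log r - (Real.log R₃ + 1) * r) + b₃)
    (hfR₃ : f R₃ = b₁) :
    f R₃ = b₁ ∧ deriv f R₃ = 0 ∧
    (∀ r > (0:ℝ), r * deriv (deriv f) r = -c) ∧
    (∀ lam > (1:ℝ), f (lam * R₃) = 0 →
      (lam * Real.log lam - lam + 1) * R₃ / (10 * Real.log R₃) = b₁ ∧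
      (R₃ ≥ 10 ^ 5 → lam ≤ 10) ∧
      (R₃ ≥ 10 ^ 5 → ∀ r ∈ Set.Icc R₃ (lam * R₃), |deriv f r| ≤ (Real.log R₃)⁻¹)) := by
  have hR₃pos : (0:ℝ) < R₃ := lt_trans (Real.exp_pos 1) hR₃
  have hlog1 : 1 < Real.log R₃ := by
    have := Real.log_lt_log (Real.exp_pos 1) hR₃
    rwa [Real.log_exp] at this
  have hlogpos : 0 < Real.log R₃ := lt_trans one_pos hlog1
  have hderiv : ∀ r > (0:ℝ), HasDerivAt f (-c * (Real.log r - Real.log R₃)) r := by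
    intro r hr
    have h1 : HasDerivAt (fun x : ℝ => x * Real.log x) (Real.log r + 1) r :=
      Real.hasDerivAt_mul_log hr.ne'
    have h2 : HasDerivAt (fun x : ℝ => (Real.log R₃ + 1) * x) (Real.log R₃ + 1) r := by
      simpa using (hasDerivAt_id r).const_mul (Real.log R₃ + 1)
    have h3 := ((h1.sub h2).const_mul (-c)).add_const b₃
    rw [hf]
    exact h3.congr_deriv (by ring)
  have hderiv_eq : ∀ r > (0:ℝ), deriv f r = -c * (Real.log r - Real.log R₃) :=
    fun r hr => (hderiv r hr).deriv
  refine ⟨hfR₃, ?_, ?_, ?_⟩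
  · rw [hderiv_eq R₃ hR₃pos]; ring
  · intro r hr
    have hev : deriv f =ᶠ[nhds r] fun x => -c * (Real.log x - Real.log R₃) := by
      filter_upwards [isOpen_Ioi.mem_nhds hr] with x hx using hderiv_eq x hx
    have h4 : HasDerivAt (fun x => -c * (Real.log x - Real.log R₃)) (-c * r⁻¹) r := by
      simpa using ((Real.hasDerivAt_log hr.ne').sub_const (Real.log R₃)).const_mul (-c)
    rw [hev.deriv_eq, h4.deriv]
    field_simp
  · intro lam hlam hflam
    have hlampos : (0:ℝ) < lam := lt_trans one_pos hlam
    have hfR₃' : -c * (R₃ * Real.log R₃ - (Real.log R₃ + 1) * R₃) + b₃ = b₁ := by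
      rw [hf] at hfR₃; exact hfR₃
    have hb3 : c * R₃ + b₃ = b₁ := by linear_combination hfR₃'
    have hlog_mul : Real.log (lam * R₃) = Real.log lam + Real.log R₃ :=
      Real.log_mul hlampos.ne' hR₃pos.ne'
    have hflam' : -c * (lam * R₃ * (Real.log lam + Real.log R₃)
        - (Real.log R₃ + 1) * (lam * R₃)) + b₃ = 0 := by
      rw [hf] at hflam; simp only at hflam
      rw [hlog_mul] at hflam; exact hflam
    have hkey : b₁ = c * R₃ * (lam * Real.log lam - lam + 1) := by
      linear_combination hflam' - hb3
    have hcinv : c * (10 * Real.log R₃) = 1 := by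
      rw [hc]; field_simp
    have hkey2 : b₁ * (10 * Real.log R₃) = R₃ * (lam * Real.log lam - lam + 1) := by
      linear_combination (10 * Real.log R₃) * hkey
        + R₃ * (lam * Real.log lam - lam + 1) * hcinv
    have h10L : (0:ℝ) < 10 * Real.log R₃ := by positivity
    have hkey' : (lam * Real.log lam - lam + 1) * R₃ / (10 * Real.log R₃) = b₁ := by
      rw [div_eq_iff h10L.ne']
      linarith [hkey2]
    have hlam10 : R₃ ≥ 10 ^ 5 → lam ≤ 10 := by
      intro hR5
      by_contra h
      push_neg at h
      -- log 10 > 2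
      have hexp2 : Real.exp 2 < 10 := by
        have h9 := Real.exp_one_lt_d9
        have : Real.exp 2 = Real.exp 1 * Real.exp 1 := by
          rw [← Real.exp_add]; norm_num
        nlinarith [Real.exp_pos 1]
      have hlog10 : (2:ℝ) < Real.log 10 := by
        rw [← Real.log_exp 2]
        exact Real.log_lt_log (Real.exp_pos 2) hexp2
      have hloglam : (2:ℝ) < Real.log lam := by
        calc (2:ℝ) < Real.log 10 := hlog10
        _ < Real.log lam := Real.log_lt_log (by norm_num) h
      -- g(lam) large
      have hg_large : (11:ℝ) < lam * Real.log lam - lam + 1 := by nlinarith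
      -- g(lam) small: log R₃ ≤ 2 √R₃, √R₃ ≥ 300
      have hsR : Real.sqrt R₃ * Real.sqrt R₃ = R₃ := Real.mul_self_sqrt hR₃pos.le
      have hsnn := Real.sqrt_nonneg R₃
      have hsqrt : (300:ℝ) ≤ Real.sqrt R₃ := by nlinarith
      have hlogle : Real.log R₃ ≤ 2 * Real.sqrt R₃ := by
        have h1 := Real.log_le_sub_one_of_pos (x := Real.sqrt R₃) (by nlinarith)
        have h2 : Real.log (Real.sqrt R₃) = Real.log R₃ / 2 := Real.log_sqrt hR₃pos.le
        linarith [h2 ▸ h1]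
      have hkey3 : b₁ * (10 * Real.log R₃)
          = (Real.sqrt R₃ * Real.sqrt R₃) * (lam * Real.log lam - lam + 1) := by
        rw [hsR]; exact hkey2
      have hspos : (0:ℝ) < Real.sqrt R₃ * Real.sqrt R₃ := by nlinarith
      linarith [hkey3, hb₁.1, hb₁.2, hsqrt,
        mul_lt_mul_of_pos_right hg_large hspos,
        mul_le_mul_of_nonneg_left hlogle (by linarith [hb₁.1] : (0:ℝ) ≤ 10 * b₁),
        mul_le_mul_of_nonneg_right hb₁.2 (by linarith : (0:ℝ) ≤ 20 * Real.sqrt R₃),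
        mul_le_mul_of_nonneg_right hsqrt hsnn]
    refine ⟨hkey', hlam10, ?_⟩
    intro hR5 r hr
    obtain ⟨hr1, hr2⟩ := hr
    have hrpos : 0 < r := lt_of_lt_of_le hR₃pos hr1
    have hlam10' := hlam10 hR5
    rw [hderiv_eq r hrpos]
    have hlogr_ge : Real.log R₃ ≤ Real.log r := Real.log_le_log hR₃pos hr1
    have hlogr_le : Real.log r ≤ Real.log lam + Real.log R₃ := by
      calc Real.log r ≤ Real.log (lam * R₃) := Real.log_le_log hrpos hr2
      _ = Real.log lam + Real.log R₃ := hlog_mul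
    have hloglam10 : Real.log lam ≤ 10 := by
      calc Real.log lam ≤ lam - 1 := Real.log_le_sub_one_of_pos hlampos
      _ ≤ 10 := by linarith
    have hcpos : 0 < c := by rw [hc]; positivity
    rw [abs_of_nonpos (by nlinarith : -c * (Real.log r - Real.log R₃) ≤ 0)]
    have hc10 : c * 10 = (Real.log R₃)⁻¹ := by
      rw [hc]; field_simp
    nlinarith [mul_le_mul_of_nonneg_left
      (show Real.log r - Real.log R₃ ≤ 10 by linarith) hcpos.le]
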